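/- Let G be a group acting freely on a set X. Let Y ⊆ X with K·Y = X for some subset K ⊆ G containing the identity, and let C ⊆ G be a symmetric generating set of G (C = C⁻¹ and every element of G is a finite product of elements of C). Set L := K⁻¹CK. Then for all y, z ∈ Y with z ∈ G·y there exist m ≥ 0 and points z₀ = y, z₁, …, z_m = z in Y and elements k₁, …, k_m ∈ L with z_i = k_i·z_{i-1} for all i. -/

import Mathlib

open Set

/-- Auxiliary chain-extension lemma: for any word in `C`, the point `l.prod • y` can be written
as `k • y'` with `k ∈ K`, `y' ∈ Y`, and `y'` connected to `y` by an `L`-chain in `Y`. -/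
lemma stmt4_aux {G X : Type*} [Group G] [MulAction G X]
    (Y : Set X) (K : Set G) (hK : (1 : G) ∈ K)
    (hKY : {x : X | ∃ k ∈ K, ∃ y ∈ Y, x = k • y} = Set.univ)
    (C : Set G) :
    ∀ (l : List G), (∀ c ∈ l, c ∈ C) → ∀ y ∈ Y,
      ∃ y' ∈ Y, ∃ k ∈ K, l.prod • y = k • y' ∧
      ∃ (m : ℕ) (w : ℕ → X), w 0 = y ∧ w m = y' ∧ (∀ i ≤ m, w i ∈ Y) ∧
        ∀ i < m, ∃ l ∈ {l : G | ∃ k ∈ K, ∃ k' ∈ K, ∃ c ∈ C, l = k⁻¹ * c * k'},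
          w (i + 1) = l • w i := by
  intro l
  induction l with
  | nil =>
    intro _ y hy
    exact ⟨y, hy, 1, hK, by simp, 0, fun _ => y, rfl, rfl,
      fun i _ => hy, fun i hi => absurd hi (Nat.not_lt_zero i)⟩
  | cons c l' ih =>
    intro hmem y hy
    have hc : c ∈ C := hmem c List.mem_cons_self
    obtain ⟨y', hy', k, hk, heq, m, w, hw0, hwm, hwY, hwstep⟩ :=
      ih (fun d hd => hmem d (List.mem_cons_of_mem c hd)) y hy
    have hx : ((c * k) • y' : X) ∈ {x : X | ∃ k ∈ K, ∃ y ∈ Y, x = k • y} := by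
      rw [hKY]; trivial
    obtain ⟨k₂, hk₂, y'', hy'', hxx⟩ := hx
    refine ⟨y'', hy'', k₂, hk₂, ?_, m + 1,
      fun i => if i ≤ m then w i else y'', by simp [hw0], by simp, ?_, ?_⟩
    · rw [List.prod_cons, mul_smul, heq, ← mul_smul, ← hxx]
    · intro i hi
      by_cases h : i ≤ m
      · simpa [h] using hwY i h
      · simpa [h] using hy''
    · intro i hi
      by_cases h : i < m
      · obtain ⟨g, hg, hgw⟩ := hwstep i h
        refine ⟨g, hg, ?_⟩
        simp only [Nat.succ_le_of_lt h, h.le, if_pos]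
        exact hgw
      · have him : i = m := by omega
        subst him
        refine ⟨k₂⁻¹ * c * k, ⟨k₂, hk₂, k, hk, c, hc, rfl⟩, ?_⟩
        have hthis : y'' = (k₂⁻¹ * (c * k)) • y' := by
          rw [mul_smul, hxx, ← mul_smul, inv_mul_cancel, one_smul]
        beta_reduce
        rw [if_neg (by omega : ¬ i + 1 ≤ i), if_pos (le_refl i), hwm, hthis, ← mul_assoc]

/-- If `G` acts freely on `X`, `K • Y = X` with `1 ∈ K`, and `C` is a symmetric
generating set of `G`, then with `L = K⁻¹CK` any two points of `Y` in the same `G`-orbit are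
connected by a chain of points of `Y`, consecutive ones differing by elements of `L`. -/
theorem stmt4 {G X : Type*} [Group G] [MulAction G X]
    (hfree : ∀ (g : G) (x : X), g • x = x → g = 1)
    (Y : Set X) (K : Set G) (hK : (1 : G) ∈ K)
    (hKY : {x : X | ∃ k ∈ K, ∃ y ∈ Y, x = k • y} = Set.univ)
    (C : Set G) (hCsym : C⁻¹ = C) (hCgen : Subgroup.closure C = ⊤) :
    ∀ y ∈ Y, ∀ z ∈ Y, (∃ g : G, z = g • y) →
      ∃ (m : ℕ) (w : ℕ → X), w 0 = y ∧ w m = z ∧ (∀ i ≤ m, w i ∈ Y) ∧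
        ∀ i < m, ∃ l ∈ {l : G | ∃ k ∈ K, ∃ k' ∈ K, ∃ c ∈ C, l = k⁻¹ * c * k'},
          w (i + 1) = l • w i := by
  rintro y hy z hz ⟨g, hg⟩
  have hmem : g ∈ Subgroup.closure C := hCgen ▸ Subgroup.mem_top g
  have hmem' : g ∈ Submonoid.closure C := by
    have h1 : g ∈ (Subgroup.closure C).toSubmonoid := hmem
    rw [Subgroup.closure_toSubmonoid] at h1
    simpa [hCsym, Set.union_self] using h1
  obtain ⟨L, hL, hLprod⟩ := Submonoid.exists_list_of_mem_closure hmem'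
  have hLC : ∀ c ∈ L, c ∈ C := hL
  cases L with
  | nil =>
    have : z = y := by rw [hg, ← hLprod, List.prod_nil, one_smul]
    exact ⟨0, fun _ => y, rfl, this.symm, fun i _ => hy, fun i hi => absurd hi (Nat.not_lt_zero i)⟩
  | cons c l' =>
    have hc : c ∈ C := hLC c List.mem_cons_self
    obtain ⟨y', hy', k, hk, heq, m, w, hw0, hwm, hwY, hwstep⟩ :=
      stmt4_aux Y K hK hKY C l' (fun d hd => hLC d (List.mem_cons_of_mem c hd)) y hy
    refine ⟨m + 1, fun i => if i ≤ m then w i else z, by simp [hw0], by simp, ?_, ?_⟩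
    · intro i hi
      by_cases h : i ≤ m
      · simpa [h] using hwY i h
      · simpa [h] using hz
    · intro i hi
      by_cases h : i < m
      · obtain ⟨g', hg', hgw⟩ := hwstep i h
        refine ⟨g', hg', ?_⟩
        simp only [Nat.succ_le_of_lt h, h.le, if_pos]
        exact hgw
      · have him : i = m := by omega
        subst him
        refine ⟨(1 : G)⁻¹ * c * k, ⟨1, hK, k, hk, c, hc, rfl⟩, ?_⟩
        have hz' : z = (c * k) • y' := by
          rw [hg, ← hLprod, List.prod_cons, mul_smul, heq, ← mul_smul]
        beta_reduce
        rw [if_neg (by omega : ¬ i + 1 ≤ i), if_pos (le_refl i), hwm, hz', inv_one, one_mul]
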